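/- (Lemma 1, derivative of the growth rate) Let Ω be an LT output degree distribution, r_i ∈ (0,1], r_o ∈ (0,1). Let δ₀ ∈ (0,1) and let λ₀ : (0,1) → (0,1) be a function that is differentiable at δ₀, whose value λ₀(δ₀) satisfies 0 < ρ_{λ₀(δ₀)} < 1 and the stationarity condition ∂f/∂λ(δ₀, λ₀(δ₀)) = 0, where ∂f/∂λ(δ,λ) = r_i·log₂((1−λ)/λ) + (ρ′_λ / ln 2)·(δ − ρ_λ)/(ρ_λ·(1−ρ_λ)) with ρ′_λ = Σ_{j=1}^{d_max} Ω_j·j·(1−2λ)^{j−1}. Then the function δ ↦ H_b(δ) − r_i·(1 − r_o) + f(δ, λ₀(δ)) is differentiable at δ₀ with derivative log₂((1−δ₀)/δ₀) + log₂( ρ_{λ₀(δ₀)} / (1 − ρ_{λ₀(δ₀)}) ). -/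

import Mathlib

open Finset Filter

/-- Binary entropy function (base-2 logarithms). -/
noncomputable def Hb (x : ℝ) : ℝ := -x * Real.logb 2 x - (1 - x) * Real.logb 2 (1 - x)

/-- `ρ_λ = (1/2)·Σ_{j=1}^{dmax} Ω_j·(1 − (1 − 2λ)^j)`. -/
noncomputable def rho (dmax : ℕ) (Ω : ℕ → ℝ) (lam : ℝ) : ℝ :=
  (1 / 2) * ∑ j ∈ Finset.Icc 1 dmax, Ω j * (1 - (1 - 2 * lam) ^ j)

/-- `ρ′_λ = Σ_{j=1}^{dmax} Ω_j·j·(1−2λ)^{j−1}`. -/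
noncomputable def rho' (dmax : ℕ) (Ω : ℕ → ℝ) (lam : ℝ) : ℝ :=
  ∑ j ∈ Finset.Icc 1 dmax, Ω j * (j : ℝ) * (1 - 2 * lam) ^ (j - 1)

/-- `f(δ,λ) = r_i·H_b(λ) + δ·log₂ ρ_λ + (1−δ)·log₂(1−ρ_λ)`. -/
noncomputable def ff (dmax : ℕ) (Ω : ℕ → ℝ) (ri δ lam : ℝ) : ℝ :=
  ri * Hb lam + δ * Real.logb 2 (rho dmax Ω lam) + (1 - δ) * Real.logb 2 (1 - rho dmax Ω lam)

/-- Lemma 1 (derivative of the growth rate): if `λ₀ : (0,1) → (0,1)` is differentiable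
at `δ₀ ∈ (0,1)`, `0 < ρ_{λ₀(δ₀)} < 1` and `∂f/∂λ(δ₀, λ₀(δ₀)) = 0`, then
`δ ↦ H_b(δ) − r_i·(1 − r_o) + f(δ, λ₀(δ))` is differentiable at `δ₀` with derivative
`log₂((1−δ₀)/δ₀) + log₂(ρ_{λ₀(δ₀)}/(1 − ρ_{λ₀(δ₀)}))`. -/
lemma hasDerivAt_rho (dmax : ℕ) (Ω : ℕ → ℝ) (l : ℝ) :
    HasDerivAt (rho dmax Ω) (rho' dmax Ω l) l := by
  have h : ∀ j ∈ Finset.Icc 1 dmax,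
      HasDerivAt (fun l : ℝ => Ω j * (1 - (1 - 2 * l) ^ j))
        (Ω j * (j : ℝ) * (1 - 2 * l) ^ (j - 1) * 2) l := by
    intro j hj
    have h1 : HasDerivAt (fun l : ℝ => 1 - 2 * l) (-2) l := by
      simpa using ((hasDerivAt_id l).const_mul (2 : ℝ)).const_sub 1
    have h4 := ((h1.pow j).const_sub 1).const_mul (Ω j)
    exact h4.congr_deriv (by ring)
  have hsum := (HasDerivAt.sum h).const_mul (1/2 : ℝ)
  have heq : rho' dmax Ω l =
      (1/2 : ℝ) * ∑ j ∈ Finset.Icc 1 dmax, Ω j * (j : ℝ) * (1 - 2 * l) ^ (j - 1) * 2 := by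
    rw [Finset.mul_sum]
    refine Finset.sum_congr rfl fun j hj => by ring
  have hfun : rho dmax Ω = fun l : ℝ =>
      (1/2 : ℝ) * ∑ j ∈ Finset.Icc 1 dmax, Ω j * (1 - (1 - 2 * l) ^ j) := rfl
  rw [hfun, heq]
  simp only [Finset.sum_apply] at hsum
  exact hsum

lemma hasDerivAt_Hb {x : ℝ} (h0 : 0 < x) (h1 : x < 1) :
    HasDerivAt Hb (Real.logb 2 ((1 - x) / x)) x := by
  have hx : x ≠ 0 := ne_of_gt h0
  have hx1 : (1 : ℝ) - x ≠ 0 := by linarith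
  have hA : ∀ y : ℝ, y ≠ 0 → HasDerivAt (fun z : ℝ => z * Real.log z) (Real.log y + 1) y := by
    intro y hy
    have := (hasDerivAt_id' y).mul (Real.hasDerivAt_log hy)
    exact this.congr_deriv (by simp [mul_inv_cancel₀ hy])
  have hB : HasDerivAt (fun y : ℝ => (1 - y) * Real.log (1 - y))
      (-(Real.log (1 - x)) - 1) x := by
    have hin : HasDerivAt (fun y : ℝ => 1 - y) (-1) x := by
      simpa using (hasDerivAt_id x).const_sub 1
    have := (hA (1 - x) hx1).comp x hin
    exact this.congr_deriv (by ring)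
  have hmain := (((hA x hx).neg.sub hB).div_const (Real.log 2))
  have hfun : Hb = fun y : ℝ => (-(y * Real.log y) - (1 - y) * Real.log (1 - y)) / Real.log 2 := by
    funext y; unfold Hb Real.logb; ring
  rw [hfun]
  refine hmain.congr_deriv ?_
  rw [Real.logb, Real.log_div hx1 hx]; ring

theorem stmt_5 (dmax : ℕ) (Ω : ℕ → ℝ)
    (hΩpos : ∀ j ∈ Finset.Icc 1 dmax, 0 ≤ Ω j)
    (hΩsum : ∑ j ∈ Finset.Icc 1 dmax, Ω j = 1)
    (ri ro : ℝ) (hri : ri ∈ Set.Ioc (0 : ℝ) 1) (hro : ro ∈ Set.Ioo (0 : ℝ) 1)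
    (δ₀ : ℝ) (hδ₀ : δ₀ ∈ Set.Ioo (0 : ℝ) 1)
    (lam : ℝ → ℝ) (lam' : ℝ)
    (hmaps : ∀ δ ∈ Set.Ioo (0 : ℝ) 1, lam δ ∈ Set.Ioo (0 : ℝ) 1)
    (hdiff : HasDerivAt lam lam' δ₀)
    (hρ : rho dmax Ω (lam δ₀) ∈ Set.Ioo (0 : ℝ) 1)
    (hstat : ri * Real.logb 2 ((1 - lam δ₀) / lam δ₀) +
        (rho' dmax Ω (lam δ₀) / Real.log 2) *
          (δ₀ - rho dmax Ω (lam δ₀)) /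
            (rho dmax Ω (lam δ₀) * (1 - rho dmax Ω (lam δ₀))) = 0) :
    HasDerivAt (fun δ => Hb δ - ri * (1 - ro) + ff dmax Ω ri δ (lam δ))
      (Real.logb 2 ((1 - δ₀) / δ₀) +
        Real.logb 2 (rho dmax Ω (lam δ₀) / (1 - rho dmax Ω (lam δ₀)))) δ₀ := by
  obtain ⟨hδ0, hδ1⟩ := hδ₀
  obtain ⟨hρ0, hρ1⟩ := hρ
  obtain ⟨hl0, hl1⟩ := hmaps δ₀ ⟨hδ0, hδ1⟩
  set ρ := rho dmax Ω (lam δ₀) with hρdef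
  set ρ' := rho' dmax Ω (lam δ₀) with hρ'def
  have hρne : ρ ≠ 0 := ne_of_gt hρ0
  have h1ρne : 1 - ρ ≠ 0 := by linarith
  have hlog2pos : (0:ℝ) < Real.log 2 := Real.log_pos (by norm_num)
  have hlog2ne : Real.log 2 ≠ 0 := ne_of_gt hlog2pos
  -- derivative of δ ↦ ρ(lam δ)
  have hrc : HasDerivAt (fun δ => rho dmax Ω (lam δ)) (ρ' * lam') δ₀ :=
    (hasDerivAt_rho dmax Ω (lam δ₀)).comp δ₀ hdiff
  -- δ ↦ logb 2 (ρ(lam δ))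
  have hlog1 : HasDerivAt (fun δ => Real.logb 2 (rho dmax Ω (lam δ)))
      ((ρ' * lam') / (ρ * Real.log 2)) δ₀ := by
    have := ((Real.hasDerivAt_log hρne).comp δ₀ hrc).div_const (Real.log 2)
    have hfun : (fun δ => Real.logb 2 (rho dmax Ω (lam δ)))
        = fun δ => Real.log (rho dmax Ω (lam δ)) / Real.log 2 := by
      funext y; rw [Real.logb]
    rw [hfun]
    exact this.congr_deriv (by field_simp)
  -- δ ↦ logb 2 (1 - ρ(lam δ))
  have hlog2 : HasDerivAt (fun δ => Real.logb 2 (1 - rho dmax Ω (lam δ)))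
      (-(ρ' * lam') / ((1 - ρ) * Real.log 2)) δ₀ := by
    have hin : HasDerivAt (fun δ => 1 - rho dmax Ω (lam δ)) (-(ρ' * lam')) δ₀ :=
      hrc.const_sub 1
    have := ((Real.hasDerivAt_log h1ρne).comp δ₀ hin).div_const (Real.log 2)
    have hfun : (fun δ => Real.logb 2 (1 - rho dmax Ω (lam δ)))
        = fun δ => Real.log (1 - rho dmax Ω (lam δ)) / Real.log 2 := by
      funext y; rw [Real.logb]
    rw [hfun]
    exact this.congr_deriv (by field_simp)
  have hterm1 : HasDerivAt (fun δ => ri * Hb (lam δ))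
      (ri * (Real.logb 2 ((1 - lam δ₀) / lam δ₀) * lam')) δ₀ :=
    ((hasDerivAt_Hb hl0 hl1).comp δ₀ hdiff).const_mul ri
  have hterm2 : HasDerivAt (fun δ => δ * Real.logb 2 (rho dmax Ω (lam δ)))
      (1 * Real.logb 2 ρ + δ₀ * ((ρ' * lam') / (ρ * Real.log 2))) δ₀ :=
    (hasDerivAt_id δ₀).mul hlog1
  have hterm3 : HasDerivAt (fun δ => (1 - δ) * Real.logb 2 (1 - rho dmax Ω (lam δ)))
      ((-1) * Real.logb 2 (1 - ρ) + (1 - δ₀) * (-(ρ' * lam') / ((1 - ρ) * Real.log 2))) δ₀ := by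
    have hone : HasDerivAt (fun δ : ℝ => 1 - δ) (-1) δ₀ := by
      simpa using (hasDerivAt_id δ₀).const_sub 1
    exact hone.mul hlog2
  have hHb : HasDerivAt Hb (Real.logb 2 ((1 - δ₀) / δ₀)) δ₀ := hasDerivAt_Hb hδ0 hδ1
  have htotal := (hHb.sub_const (ri * (1 - ro))).add ((hterm1.add hterm2).add hterm3)
  have hfun : (fun δ => Hb δ - ri * (1 - ro) + ff dmax Ω ri δ (lam δ))
      = fun δ => (Hb δ - ri * (1 - ro)) +
          (ri * Hb (lam δ) + δ * Real.logb 2 (rho dmax Ω (lam δ))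
            + (1 - δ) * Real.logb 2 (1 - rho dmax Ω (lam δ))) := rfl
  rw [hfun]
  refine htotal.congr_deriv ?_
  rw [Real.logb_div hρne h1ρne]
  have hstat' : ri * Real.logb 2 ((1 - lam δ₀) / lam δ₀)
      = -((ρ' / Real.log 2) * (δ₀ - ρ) / (ρ * (1 - ρ))) := by linarith
  have hkey : ri * (Real.logb 2 ((1 - lam δ₀) / lam δ₀) * lam')
      = (-((ρ' / Real.log 2) * (δ₀ - ρ) / (ρ * (1 - ρ)))) * lam' := by
    rw [← mul_assoc, hstat']
  rw [hkey]
  field_simp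
  ring
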